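/- Define a bilinear multiplication on ℂ[t₀^{±1}, t₁^{±1}] by (t₀^n t₁^m)(t₀^s t₁^r) = δ_{n+m,r} t₀^{n+s} t₁^m, and a bilinear form by ⟨t₀^n t₁^m, t₀^s t₁^r⟩ = δ_{n+s,0} δ_{m+n,r}, for m,n,r,s ∈ ℤ. Then this multiplication is associative, and the bilinear form is symmetric and associative (i.e., ⟨xy, z⟩ = ⟨x, yz⟩ for all x, y, z). -/

import Mathlib

/-- The multiplication on `ℂ[t₀^{±1},t₁^{±1}]` (modeled as finitely supported
functions on the basis `{t₀^n t₁^m}`, i.e. `(ℤ × ℤ) →₀ ℂ`) determined bilinearly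
by `(t₀^n t₁^m)(t₀^s t₁^r) = δ_{n+m,r} t₀^{n+s} t₁^m`. -/
noncomputable def qtMul (x y : (ℤ × ℤ) →₀ ℂ) : (ℤ × ℤ) →₀ ℂ :=
  x.sum fun p c => y.sum fun q d =>
    if p.1 + p.2 = q.2 then Finsupp.single (p.1 + q.1, p.2) (c * d) else 0

/-- The bilinear form determined by `⟨t₀^n t₁^m, t₀^s t₁^r⟩ = δ_{n+s,0}δ_{m+n,r}`. -/
noncomputable def qtForm (x y : (ℤ × ℤ) →₀ ℂ) : ℂ :=
  x.sum fun p c => y.sum fun q d =>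
    if p.1 + q.1 = 0 ∧ p.2 + p.1 = q.2 then c * d else 0

lemma qtMul_zero_left (y : (ℤ × ℤ) →₀ ℂ) : qtMul 0 y = 0 := by
  simp [qtMul]

lemma qtMul_zero_right (x : (ℤ × ℤ) →₀ ℂ) : qtMul x 0 = 0 := by
  simp [qtMul]

lemma qtForm_zero_left (y : (ℤ × ℤ) →₀ ℂ) : qtForm 0 y = 0 := by
  simp [qtForm]

lemma qtForm_zero_right (x : (ℤ × ℤ) →₀ ℂ) : qtForm x 0 = 0 := by
  simp [qtForm]

lemma qtMul_add_left (x x' y : (ℤ × ℤ) →₀ ℂ) :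
    qtMul (x + x') y = qtMul x y + qtMul x' y := by
  unfold qtMul
  rw [Finsupp.sum_add_index]
  · intro p _
    simp
  · intro p _ c c'
    rw [← Finsupp.sum_add]
    apply Finsupp.sum_congr
    intro q _
    split <;> simp [add_mul, Finsupp.single_add]

lemma qtMul_add_right (x y y' : (ℤ × ℤ) →₀ ℂ) :
    qtMul x (y + y') = qtMul x y + qtMul x y' := by
  unfold qtMul
  rw [← Finsupp.sum_add]
  apply Finsupp.sum_congr
  intro p _
  rw [Finsupp.sum_add_index]
  · intro q _
    simp
  · intro q _ d d'
    split <;> simp [mul_add, Finsupp.single_add]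

lemma qtForm_add_left (x x' y : (ℤ × ℤ) →₀ ℂ) :
    qtForm (x + x') y = qtForm x y + qtForm x' y := by
  unfold qtForm
  rw [Finsupp.sum_add_index]
  · intro p _
    simp
  · intro p _ c c'
    rw [← Finsupp.sum_add]
    apply Finsupp.sum_congr
    intro q _
    split <;> simp [add_mul]

lemma qtForm_add_right (x y y' : (ℤ × ℤ) →₀ ℂ) :
    qtForm x (y + y') = qtForm x y + qtForm x y' := by
  unfold qtForm
  rw [← Finsupp.sum_add]
  apply Finsupp.sum_congr
  intro p _
  rw [Finsupp.sum_add_index]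
  · intro q _
    simp
  · intro q _ d d'
    split <;> simp [mul_add]

lemma qtMul_single_single (p q : ℤ × ℤ) (c d : ℂ) :
    qtMul (Finsupp.single p c) (Finsupp.single q d) =
      if p.1 + p.2 = q.2 then Finsupp.single (p.1 + q.1, p.2) (c * d) else 0 := by
  unfold qtMul
  rw [Finsupp.sum_single_index, Finsupp.sum_single_index]
  · split <;> simp
  · rw [Finsupp.sum_single_index] <;> split <;> simp

lemma qtForm_single_single (p q : ℤ × ℤ) (c d : ℂ) :
    qtForm (Finsupp.single p c) (Finsupp.single q d) =
      if p.1 + q.1 = 0 ∧ p.2 + p.1 = q.2 then c * d else 0 := by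
  unfold qtForm
  rw [Finsupp.sum_single_index, Finsupp.sum_single_index]
  · split <;> simp
  · rw [Finsupp.sum_single_index] <;> split <;> simp

/-- the multiplication `(t₀^n t₁^m)(t₀^s t₁^r) = δ_{n+m,r} t₀^{n+s} t₁^m`
is associative, and the bilinear form `⟨t₀^n t₁^m, t₀^s t₁^r⟩ = δ_{n+s,0}δ_{m+n,r}`
is symmetric and associative (invariant): `⟨xy, z⟩ = ⟨x, yz⟩`. -/
theorem stmt_17 :
    (∀ x y z : (ℤ × ℤ) →₀ ℂ, qtMul (qtMul x y) z = qtMul x (qtMul y z)) ∧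
    (∀ x y : (ℤ × ℤ) →₀ ℂ, qtForm x y = qtForm y x) ∧
    (∀ x y z : (ℤ × ℤ) →₀ ℂ, qtForm (qtMul x y) z = qtForm x (qtMul y z)) := by
  refine ⟨?_, ?_, ?_⟩
  · intro x y z
    induction x using Finsupp.induction_linear with
    | zero => simp [qtMul_zero_left]
    | add f g hf hg => simp [qtMul_add_left, hf, hg]
    | single p c =>
      induction y using Finsupp.induction_linear with
      | zero => simp [qtMul_zero_left, qtMul_zero_right]
      | add f g hf hg => simp [qtMul_add_left, qtMul_add_right, hf, hg]
      | single q d =>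
        induction z using Finsupp.induction_linear with
        | zero => simp [qtMul_zero_right]
        | add f g hf hg => simp [qtMul_add_right, hf, hg]
        | single r e =>
          rw [qtMul_single_single, qtMul_single_single]
          split_ifs with hA hC
          · rw [qtMul_single_single, qtMul_single_single]
            simp only
            rw [if_pos hA, if_pos (show p.1 + q.1 + p.2 = r.2 by omega)]
            rw [show p.1 + q.1 + r.1 = p.1 + (q.1 + r.1) by ring, mul_assoc]
          · rw [qtMul_single_single, qtMul_zero_right]
            simp only
            rw [if_neg (by omega)]
          · rw [qtMul_zero_left, qtMul_single_single]
            simp only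
            rw [if_neg (by omega)]
          · rw [qtMul_zero_left, qtMul_zero_right]
  · intro x y
    induction x using Finsupp.induction_linear with
    | zero => simp [qtForm_zero_left, qtForm_zero_right]
    | add f g hf hg => simp [qtForm_add_left, qtForm_add_right, hf, hg]
    | single p c =>
      induction y using Finsupp.induction_linear with
      | zero => simp [qtForm_zero_left, qtForm_zero_right]
      | add f g hf hg => simp [qtForm_add_left, qtForm_add_right, hf, hg]
      | single q d =>
        rw [qtForm_single_single, qtForm_single_single]
        split_ifs with h h'
        · ring
        · exact absurd ⟨by omega, by omega⟩ h'
        · exact absurd ⟨by omega, by omega⟩ h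
        · rfl
  · intro x y z
    induction x using Finsupp.induction_linear with
    | zero => simp [qtMul_zero_left, qtForm_zero_left]
    | add f g hf hg => simp [qtMul_add_left, qtForm_add_left, hf, hg]
    | single p c =>
      induction y using Finsupp.induction_linear with
      | zero => simp [qtMul_zero_left, qtMul_zero_right, qtForm_zero_left, qtForm_zero_right]
      | add f g hf hg =>
        simp [qtMul_add_left, qtMul_add_right, qtForm_add_left, qtForm_add_right, hf, hg]
      | single q d =>
        induction z using Finsupp.induction_linear with
        | zero => simp [qtMul_zero_right, qtForm_zero_right]
        | add f g hf hg => simp [qtMul_add_right, qtForm_add_right, hf, hg]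
        | single r e =>
          rw [qtMul_single_single, qtMul_single_single]
          split_ifs with hA hC
          · rw [qtForm_single_single, qtForm_single_single]
            simp only
            split_ifs with hB hD hD
            · ring
            · exact absurd ⟨by omega, by omega⟩ hD
            · exact absurd ⟨by omega, by omega⟩ hB
            · rfl
          · rw [qtForm_single_single, qtForm_zero_right]
            simp only
            rw [if_neg (by omega)]
          · rw [qtForm_zero_left, qtForm_single_single]
            simp only
            rw [if_neg (by omega)]
          · rw [qtForm_zero_left, qtForm_zero_right]
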